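/- Let G be a connected graph on n vertices. Then 2√F ≤ LE_R(G) ≤ √(2nF), where f = Σ_{1≤i<j≤n} r(i,j)² and F = f + (1/2) Σ_{i=1}^n (RTr(i) − (1/n) Σ_{j=1}^n RTr(j))². -/

import Mathlib

open Matrix Polynomial BigOperators

/-- `Ldag` is the Moore–Penrose inverse of `L`: `L Ldag L = L`, `Ldag L Ldag = Ldag`,
and both `L Ldag` and `Ldag L` are symmetric. -/
def IsMoorePenroseInv {V : Type*} [Fintype V] (L Ldag : Matrix V V ℝ) : Prop :=
  L * Ldag * L = L ∧ Ldag * L * Ldag = Ldag ∧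
    (L * Ldag)ᵀ = L * Ldag ∧ (Ldag * L)ᵀ = Ldag * L

/-- The resistance distance between vertices `i` and `j`, computed from the
Moore–Penrose inverse `Ldag` of the Laplacian: `r(i,j) = Ldag i i + Ldag j j - 2 Ldag i j`. -/
def resDist {V : Type*} (Ldag : Matrix V V ℝ) (i j : V) : ℝ :=
  Ldag i i + Ldag j j - 2 * Ldag i j

/-- The resistance distance matrix `R(G)`. -/
def resMatrix {V : Type*} [DecidableEq V] (Ldag : Matrix V V ℝ) : Matrix V V ℝ :=
  Matrix.of fun i j => if i = j then 0 else resDist Ldag i j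

/-- The resistance transmission `RTr(v) = ∑ u, r(u,v)` of a vertex `v`. -/
def resTrans {V : Type*} [Fintype V] (Ldag : Matrix V V ℝ) (v : V) : ℝ :=
  ∑ u, resDist Ldag u v

/-- The resistance Laplacian matrix `R^L = Diag(RTr) - R`. -/
def resLap {V : Type*} [Fintype V] [DecidableEq V] (Ldag : Matrix V V ℝ) : Matrix V V ℝ :=
  Matrix.diagonal (resTrans Ldag) - resMatrix Ldag

/-- The resistance signless Laplacian matrix `R^Q = Diag(RTr) + R`. -/
def resSignlessLap {V : Type*} [Fintype V] [DecidableEq V] (Ldag : Matrix V V ℝ) :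
    Matrix V V ℝ :=
  Matrix.diagonal (resTrans Ldag) + resMatrix Ldag

instance {V W : Type*} : DecidableRel (completeBipartiteGraph V W).Adj := fun v w => by
  simp only [completeBipartiteGraph_adj]
  infer_instance

lemma mp_unique {V : Type*} [Fintype V] {L A B : Matrix V V ℝ}
    (hA : IsMoorePenroseInv L A) (hB : IsMoorePenroseInv L B) : A = B := by
  obtain ⟨a1, a2, a3, a4⟩ := hA
  obtain ⟨b1, b2, b3, b4⟩ := hB
  have hLB : L * B = L * A := by
    calc L * B = (L * A * L) * B := by rw [a1]
    _ = (L * A) * (L * B) := by rw [mul_assoc, mul_assoc]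
    _ = (L * A)ᵀ * (L * B)ᵀ := by rw [a3, b3]
    _ = ((L * B) * (L * A))ᵀ := (transpose_mul _ _).symm
    _ = ((L * B * L) * A)ᵀ := congrArg Matrix.transpose (mul_assoc _ _ _).symm
    _ = (L * A)ᵀ := by rw [b1]
    _ = L * A := a3
  have hBL : B * L = A * L := by
    calc B * L = B * (L * A * L) := by rw [a1]
    _ = (B * L) * (A * L) := by simp only [mul_assoc]
    _ = (B * L)ᵀ * (A * L)ᵀ := by rw [a4, b4]
    _ = ((A * L) * (B * L))ᵀ := (transpose_mul _ _).symm
    _ = (A * (L * B * L))ᵀ := congrArg Matrix.transpose (by simp only [mul_assoc])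
    _ = (A * L)ᵀ := by rw [b1]
    _ = A * L := a4
  calc A = A * L * A := a2.symm
  _ = A * (L * A) := by rw [mul_assoc]
  _ = A * (L * B) := by rw [hLB]
  _ = (A * L) * B := by rw [mul_assoc]
  _ = (B * L) * B := by rw [hBL]
  _ = B := b2

lemma mp_symm {V : Type*} [Fintype V] {L A : Matrix V V ℝ} (hL : Lᵀ = L)
    (h : IsMoorePenroseInv L A) : Aᵀ = A := by
  obtain ⟨a1, a2, a3, a4⟩ := h
  have h' : IsMoorePenroseInv L Aᵀ := by
    refine ⟨?_, ?_, ?_, ?_⟩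
    · have := congrArg Matrix.transpose a1
      simp only [transpose_mul, hL] at this
      rw [← mul_assoc] at this
      exact this
    · have := congrArg Matrix.transpose a2
      simp only [transpose_mul, hL] at this
      rw [← mul_assoc] at this
      exact this
    · have h5 : L * Aᵀ = A * L := by
        calc L * Aᵀ = (A * Lᵀ)ᵀ := by rw [transpose_mul, transpose_transpose]
        _ = (A * L)ᵀ := by rw [hL]
        _ = A * L := a4
      rw [h5]; exact a4
    · have h5 : Aᵀ * L = L * A := by
        calc Aᵀ * L = (Lᵀ * A)ᵀ := by rw [transpose_mul, transpose_transpose]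
        _ = (L * A)ᵀ := by rw [hL]
        _ = L * A := a3
      rw [h5]; exact a3
  exact mp_unique h' ⟨a1, a2, a3, a4⟩

lemma charpoly_conj {m R : Type*} [Fintype m] [DecidableEq m] [CommRing R]
    (U A V : Matrix m m R) (h1 : U * V = 1) : (U * A * V).charpoly = A.charpoly := by
  set f : Matrix m m R →+* Matrix m m R[X] := (C : R →+* R[X]).mapMatrix with hf
  have hmap : f U * f V = 1 := by rw [← _root_.map_mul, h1, _root_.map_one]
  have key : charmatrix (U * A * V) = f U * charmatrix A * f V := by
    unfold charmatrix
    rw [mul_sub, sub_mul]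
    congr 1
    · calc Matrix.scalar m (X : R[X])
          = Matrix.scalar m (X : R[X]) * (f U * f V) := by rw [hmap, mul_one]
      _ = f U * Matrix.scalar m (X : R[X]) * f V := by
          rw [← mul_assoc, (scalar_commute (X : R[X]) (fun r => Commute.all _ _) (f U)).eq]
    · rw [hf]
      simp only [RingHom.mapMatrix_apply]
      rw [← Matrix.map_mul, ← Matrix.map_mul]
  have hdet : (f U).det * (f V).det = 1 := by rw [← det_mul, hmap, det_one]
  rw [Matrix.charpoly, key, det_mul, det_mul, Matrix.charpoly]
  calc (f U).det * (charmatrix A).det * (f V).det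
      = (charmatrix A).det * ((f U).det * (f V).det) := by ring
  _ = (charmatrix A).det := by rw [hdet, mul_one]

lemma eig_multiset_eq {n : ℕ} {M : Matrix (Fin n) (Fin n) ℝ} (hH : M.IsHermitian)
    {γ : Fin n → ℝ} (hchar : M.charpoly = ∏ i, (X - C (γ i))) :
    Multiset.map γ Finset.univ.val = Multiset.map hH.eigenvalues Finset.univ.val := by
  have hU1 : (hH.eigenvectorUnitary : Matrix (Fin n) (Fin n) ℝ) *
      star (hH.eigenvectorUnitary : Matrix (Fin n) (Fin n) ℝ) = 1 :=
    (Matrix.mem_unitaryGroup_iff).mp hH.eigenvectorUnitary.2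
  have hspec := hH.spectral_theorem
  rw [RCLike.ofReal_real_eq_id] at hspec
  have hcd : M.charpoly = (Matrix.diagonal (id ∘ hH.eigenvalues)).charpoly := by
    conv_lhs => rw [hspec]
    exact charpoly_conj _ _ _ hU1
  have hdiag : (Matrix.diagonal (id ∘ hH.eigenvalues)).charpoly
      = ∏ i, (X - C (hH.eigenvalues i)) := by
    rw [Matrix.charpoly_of_upperTriangular _ (Matrix.blockTriangular_diagonal _)]
    simp
  have key : (∏ i, (X - C (γ i))) = ∏ i, (X - C (hH.eigenvalues i)) := by
    rw [← hchar, hcd, hdiag]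
  have h1 : ((Multiset.map γ Finset.univ.val).map (fun a => X - C a)).prod
      = ((Multiset.map hH.eigenvalues Finset.univ.val).map (fun a => X - C a)).prod := by
    simp only [Multiset.map_map, Function.comp]
    exact key
  have := congrArg Polynomial.roots h1
  rwa [Polynomial.roots_multiset_prod_X_sub_C, Polynomial.roots_multiset_prod_X_sub_C] at this

lemma sum_fn_eq_of_multiset {n : ℕ} {γ μ : Fin n → ℝ}
    (h : Multiset.map γ Finset.univ.val = Multiset.map μ Finset.univ.val) (g : ℝ → ℝ) :
    ∑ i, g (γ i) = ∑ i, g (μ i) := by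
  have : Multiset.map (g ∘ γ) Finset.univ.val = Multiset.map (g ∘ μ) Finset.univ.val := by
    rw [← Multiset.map_map, ← Multiset.map_map, h]
  calc ∑ i, g (γ i) = (Multiset.map (g ∘ γ) Finset.univ.val).sum := rfl
  _ = (Multiset.map (g ∘ μ) Finset.univ.val).sum := by rw [this]
  _ = ∑ i, g (μ i) := rfl

lemma trace_sq_eq_sum_eigs {n : ℕ} {M : Matrix (Fin n) (Fin n) ℝ} (hH : M.IsHermitian) :
    (M * M).trace = ∑ i, hH.eigenvalues i ^ 2 := by
  set U : Matrix (Fin n) (Fin n) ℝ := (hH.eigenvectorUnitary : Matrix (Fin n) (Fin n) ℝ)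
  have hU2 : star U * U = 1 := (Matrix.mem_unitaryGroup_iff').mp hH.eigenvectorUnitary.2
  have hspec := hH.spectral_theorem
  rw [RCLike.ofReal_real_eq_id] at hspec
  set D := Matrix.diagonal (id ∘ hH.eigenvalues) with hD
  have hMM : M * M = U * (D * D) * star U := by
    rw [hspec]
    calc U * D * star U * (U * D * star U)
        = U * D * ((star U * U) * (D * star U)) := by simp only [Matrix.mul_assoc]
    _ = U * D * (D * star U) := by rw [hU2, Matrix.one_mul]
    _ = U * (D * D) * star U := by simp only [Matrix.mul_assoc]
  rw [hMM, Matrix.trace_mul_cycle, hU2, Matrix.one_mul, hD,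
    Matrix.diagonal_mul_diagonal, Matrix.trace_diagonal]
  simp [sq]

lemma trace_eq_sum_eigs {n : ℕ} {M : Matrix (Fin n) (Fin n) ℝ} (hH : M.IsHermitian) :
    M.trace = ∑ i, hH.eigenvalues i := by
  set U : Matrix (Fin n) (Fin n) ℝ := (hH.eigenvectorUnitary : Matrix (Fin n) (Fin n) ℝ)
  have hU2 : star U * U = 1 := (Matrix.mem_unitaryGroup_iff').mp hH.eigenvectorUnitary.2
  have hspec := hH.spectral_theorem
  rw [RCLike.ofReal_real_eq_id] at hspec
  conv_lhs => rw [hspec, Unitary.conjStarAlgAut_apply]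
  rw [Matrix.trace_mul_cycle, hU2, Matrix.one_mul, Matrix.trace_diagonal]
  simp

lemma key_ineq {n : ℕ} (η : Fin n → ℝ) (h0 : ∑ i, η i = 0) :
    2 * (∑ i, η i ^ 2) ≤ (∑ i, |η i|) ^ 2 ∧ (∑ i, |η i|) ^ 2 ≤ n * ∑ i, η i ^ 2 := by
  set Q := ∑ i, η i ^ 2 with hQdef
  constructor
  · have hsq : (∑ i, |η i|) ^ 2 = ∑ i, ∑ j, |η i * η j| := by
      rw [sq, Finset.sum_mul_sum]
      simp [abs_mul]
    have hT : ∑ i, ∑ j, η i * η j = 0 := by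
      rw [← Finset.sum_mul_sum, h0, zero_mul]
    have hsplit : ∀ (g : Fin n → Fin n → ℝ), ∑ i, ∑ j, g i j
        = ∑ i, g i i + ∑ i, ∑ j ∈ Finset.univ.erase i, g i j := by
      intro g
      rw [← Finset.sum_add_distrib]
      exact Finset.sum_congr rfl fun i _ =>
        (Finset.add_sum_erase Finset.univ (g i) (Finset.mem_univ i)).symm
    have hS : ∑ i, ∑ j ∈ Finset.univ.erase i, η i * η j = -Q := by
      have := hsplit (fun i j => η i * η j)
      rw [hT] at this
      have hdiag : ∑ i, η i * η i = Q := by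
        simp [hQdef, sq]
      linarith [this, hdiag]
    have habs : Q ≤ ∑ i, ∑ j ∈ Finset.univ.erase i, |η i * η j| := by
      calc Q = |∑ i, ∑ j ∈ Finset.univ.erase i, η i * η j| := by
            rw [hS, abs_neg, abs_of_nonneg]
            exact Finset.sum_nonneg fun i _ => sq_nonneg _
      _ ≤ ∑ i, |∑ j ∈ Finset.univ.erase i, η i * η j| :=
            Finset.abs_sum_le_sum_abs _ _
      _ ≤ ∑ i, ∑ j ∈ Finset.univ.erase i, |η i * η j| :=
            Finset.sum_le_sum fun i _ => Finset.abs_sum_le_sum_abs _ _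
    have hdiag2 : ∑ i, |η i * η i| = Q := by
      simp [hQdef, sq, abs_mul_self, ← abs_mul]
    rw [hsq, hsplit (fun i j => |η i * η j|), hdiag2]
    linarith
  · have := Finset.sum_mul_sq_le_sq_mul_sq Finset.univ (fun _ => (1 : ℝ)) (fun i => |η i|)
    simp only [one_mul, one_pow, sq_abs] at this
    simpa [Finset.card_univ] using this

lemma resDist_self {V : Type*} (Ldag : Matrix V V ℝ) (i : V) : resDist Ldag i i = 0 := by
  unfold resDist; ring

lemma resLap_apply_eq {n : ℕ} (Ldag : Matrix (Fin n) (Fin n) ℝ) (i : Fin n) :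
    resLap Ldag i i = resTrans Ldag i := by
  simp [resLap, resMatrix, Matrix.sub_apply]

lemma resLap_apply_ne {n : ℕ} (Ldag : Matrix (Fin n) (Fin n) ℝ) {i j : Fin n} (h : i ≠ j) :
    resLap Ldag i j = -(resDist Ldag i j) := by
  simp [resLap, resMatrix, Matrix.sub_apply, Matrix.diagonal_apply_ne _ h, h]

lemma sum_split_erase {n : ℕ} (g : Fin n → Fin n → ℝ) : (∑ i, ∑ j, g i j)
    = ∑ i, g i i + ∑ i, ∑ j ∈ Finset.univ.erase i, g i j := by
  rw [← Finset.sum_add_distrib]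
  exact Finset.sum_congr rfl fun i _ =>
    (Finset.add_sum_erase Finset.univ (g i) (Finset.mem_univ i)).symm

lemma offdiag_sum_eq {n : ℕ} (Ldag : Matrix (Fin n) (Fin n) ℝ)
    (hr : ∀ i j, resDist Ldag i j = resDist Ldag j i) :
    ∑ i, ∑ j ∈ Finset.univ.erase i, resDist Ldag i j ^ 2
      = 2 * ∑ p ∈ Finset.univ.filter (fun p : Fin n × Fin n => p.1 < p.2),
          resDist Ldag p.1 p.2 ^ 2 := by
  have h1 : ∑ i, ∑ j ∈ Finset.univ.erase i, resDist Ldag i j ^ 2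
      = ∑ i, ∑ j, resDist Ldag i j ^ 2 := by
    rw [sum_split_erase (fun i j => resDist Ldag i j ^ 2)]
    simp [resDist_self]
  have hprod : ∑ p : Fin n × Fin n, resDist Ldag p.1 p.2 ^ 2
      = ∑ i, ∑ j, resDist Ldag i j ^ 2 :=
    Fintype.sum_prod_type (f := fun p : Fin n × Fin n => resDist Ldag p.1 p.2 ^ 2)
  rw [h1, ← hprod]
  rw [← Finset.sum_filter_add_sum_filter_not Finset.univ
    (fun p : Fin n × Fin n => p.1 < p.2) (fun p => resDist Ldag p.1 p.2 ^ 2)]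
  have h2 : ∑ p ∈ Finset.univ.filter (fun p : Fin n × Fin n => ¬ p.1 < p.2),
      resDist Ldag p.1 p.2 ^ 2
      = ∑ p ∈ Finset.univ.filter (fun p : Fin n × Fin n => p.2 < p.1),
          resDist Ldag p.1 p.2 ^ 2 := by
    rw [← Finset.sum_filter_add_sum_filter_not
      (Finset.univ.filter (fun p : Fin n × Fin n => ¬ p.1 < p.2))
      (fun p : Fin n × Fin n => p.2 < p.1) (fun p => resDist Ldag p.1 p.2 ^ 2)]
    have e1 : (Finset.univ.filter (fun p : Fin n × Fin n => ¬ p.1 < p.2)).filter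
        (fun p : Fin n × Fin n => p.2 < p.1)
        = Finset.univ.filter (fun p : Fin n × Fin n => p.2 < p.1) := by
      ext p
      simp only [Finset.mem_filter, Finset.mem_univ, true_and]
      exact ⟨fun h => h.2, fun h => ⟨asymm h, h⟩⟩
    have e2 : ∑ p ∈ (Finset.univ.filter (fun p : Fin n × Fin n => ¬ p.1 < p.2)).filter
        (fun p : Fin n × Fin n => ¬ p.2 < p.1), resDist Ldag p.1 p.2 ^ 2 = 0 := by
      apply Finset.sum_eq_zero
      intro p hp
      simp only [Finset.mem_filter, Finset.mem_univ, true_and] at hp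
      have : p.1 = p.2 := le_antisymm (not_lt.mp hp.2) (not_lt.mp hp.1)
      rw [← this, resDist_self]
      norm_num
    rw [e1, e2, add_zero]
  have h3 : ∑ p ∈ Finset.univ.filter (fun p : Fin n × Fin n => p.2 < p.1),
      resDist Ldag p.1 p.2 ^ 2
      = ∑ p ∈ Finset.univ.filter (fun p : Fin n × Fin n => p.1 < p.2),
          resDist Ldag p.1 p.2 ^ 2 := by
    apply Finset.sum_bij' (fun p _ => Prod.swap p) (fun p _ => Prod.swap p)
    · intro p hp
      simp only [Finset.mem_filter, Finset.mem_univ, true_and] at hp ⊢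
      exact hp
    · intro p hp
      simp only [Finset.mem_filter, Finset.mem_univ, true_and] at hp ⊢
      exact hp
    · intro p _; exact Prod.swap_swap p
    · intro p _; exact Prod.swap_swap p
    · intro p _
      simp only [Prod.fst_swap, Prod.snd_swap]
      rw [hr]
  rw [h2, h3]; ring

lemma trace_resLap {n : ℕ} (Ldag : Matrix (Fin n) (Fin n) ℝ) :
    (resLap Ldag).trace = ∑ i, resTrans Ldag i := by
  unfold Matrix.trace
  exact Finset.sum_congr rfl fun i _ => resLap_apply_eq Ldag i

lemma trace_resLap_sq {n : ℕ} (Ldag : Matrix (Fin n) (Fin n) ℝ)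
    (hr : ∀ i j, resDist Ldag i j = resDist Ldag j i) :
    (resLap Ldag * resLap Ldag).trace = ∑ i, resTrans Ldag i ^ 2
      + 2 * ∑ p ∈ Finset.univ.filter (fun p : Fin n × Fin n => p.1 < p.2),
          resDist Ldag p.1 p.2 ^ 2 := by
  have expand : (resLap Ldag * resLap Ldag).trace
      = ∑ i, ∑ j, resLap Ldag i j * resLap Ldag j i := by
    simp [Matrix.trace, Matrix.diag, Matrix.mul_apply]
  rw [expand, sum_split_erase (fun i j => resLap Ldag i j * resLap Ldag j i)]
  congr 1
  · exact Finset.sum_congr rfl fun i _ => by rw [resLap_apply_eq, sq]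
  · rw [← offdiag_sum_eq Ldag hr]
    apply Finset.sum_congr rfl
    intro i _
    apply Finset.sum_congr rfl
    intro j hj
    have hji : j ≠ i := Finset.ne_of_mem_erase hj
    rw [resLap_apply_ne Ldag (Ne.symm hji), resLap_apply_ne Ldag hji,
      neg_mul_neg, hr j i, sq]

theorem resLapEnergy_bounds {n : ℕ} (hn : 0 < n)
    (G : SimpleGraph (Fin n)) [DecidableRel G.Adj] (hG : G.Connected)
    (Ldag : Matrix (Fin n) (Fin n) ℝ)
    (hpen : IsMoorePenroseInv (G.lapMatrix ℝ) Ldag)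
    (γL : Fin n → ℝ) (hchar : (resLap Ldag).charpoly = ∏ i, (X - C (γL i)))
    (f F LE : ℝ)
    (hf : f = ∑ e ∈ Finset.univ.filter (fun e : Fin n × Fin n => e.1 < e.2),
      resDist Ldag e.1 e.2 ^ 2)
    (hF : F = f + (1 / 2) * ∑ i, (resTrans Ldag i - (∑ j, resTrans Ldag j) / n) ^ 2)
    (hLE : LE = ∑ i, |γL i - (∑ j, resTrans Ldag j) / n|) :
    2 * Real.sqrt F ≤ LE ∧ LE ≤ Real.sqrt (2 * n * F) := by
  have hLsym : (G.lapMatrix ℝ)ᵀ = G.lapMatrix ℝ := G.isSymm_lapMatrix (R := ℝ)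
  have hdag : Ldagᵀ = Ldag := mp_symm hLsym hpen
  have hsym : ∀ i j, Ldag i j = Ldag j i := by
    intro i j
    have := congrFun (congrFun hdag j) i
    rwa [Matrix.transpose_apply] at this
  have hr : ∀ i j, resDist Ldag i j = resDist Ldag j i := by
    intro i j; unfold resDist; rw [hsym i j]; ring
  have hH : (resLap Ldag).IsHermitian := by
    rw [Matrix.IsHermitian, Matrix.conjTranspose_eq_transpose_of_trivial]
    ext i j
    rw [Matrix.transpose_apply]
    by_cases h : i = j
    · subst h; rfl
    · rw [resLap_apply_ne Ldag (Ne.symm h), resLap_apply_ne Ldag h, hr]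
  have hmul := eig_multiset_eq hH hchar
  set μ := hH.eigenvalues with hμ
  set T := ∑ j, resTrans Ldag j with hT
  have hnR : (n : ℝ) ≠ 0 := Nat.cast_ne_zero.mpr hn.ne'
  set avg := T / (n : ℝ) with havg
  set η := fun i => γL i - avg with hη
  have s1 : ∑ i, γL i = ∑ i, μ i := by
    simpa using sum_fn_eq_of_multiset hmul id
  have s2 : ∑ i, γL i ^ 2 = ∑ i, μ i ^ 2 :=
    sum_fn_eq_of_multiset hmul (fun x => x ^ 2)
  have hsum_gamma : ∑ i, γL i = T := by
    rw [s1, ← trace_eq_sum_eigs hH, trace_resLap]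
  have hsumsq : ∑ i, γL i ^ 2 = ∑ i, resTrans Ldag i ^ 2 + 2 * f := by
    rw [s2, ← trace_sq_eq_sum_eigs hH, trace_resLap_sq Ldag hr, hf]
  have h0 : ∑ i, η i = 0 := by
    simp only [hη]
    rw [Finset.sum_sub_distrib, hsum_gamma, Finset.sum_const, Finset.card_univ,
      Fintype.card_fin, nsmul_eq_mul, havg]
    field_simp
    ring
  have expand1 : ∑ i, η i ^ 2
      = ∑ i, γL i ^ 2 - 2 * avg * (∑ i, γL i) + n * avg ^ 2 := by
    have e : ∀ i, η i ^ 2 = γL i ^ 2 - 2 * avg * γL i + avg ^ 2 := fun i => by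
      simp only [hη]; ring
    rw [Finset.sum_congr rfl (fun i _ => e i), Finset.sum_add_distrib,
      Finset.sum_sub_distrib, ← Finset.mul_sum, Finset.sum_const, Finset.card_univ,
      Fintype.card_fin, nsmul_eq_mul]
  have expand2 : ∑ i, (resTrans Ldag i - avg) ^ 2
      = ∑ i, resTrans Ldag i ^ 2 - 2 * avg * T + n * avg ^ 2 := by
    have e : ∀ i, (resTrans Ldag i - avg) ^ 2
        = resTrans Ldag i ^ 2 - 2 * avg * resTrans Ldag i + avg ^ 2 := fun i => by ring
    rw [Finset.sum_congr rfl (fun i _ => e i), Finset.sum_add_distrib,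
      Finset.sum_sub_distrib, ← Finset.mul_sum, Finset.sum_const, Finset.card_univ,
      Fintype.card_fin, nsmul_eq_mul, hT]
  have hQ : ∑ i, η i ^ 2 = 2 * F := by
    rw [expand1, hsumsq, hsum_gamma, hF]
    rw [show ∑ i, (resTrans Ldag i - (∑ j, resTrans Ldag j) / ↑n) ^ 2
        = ∑ i, (resTrans Ldag i - avg) ^ 2 from rfl, expand2]
    ring
  obtain ⟨low, high⟩ := key_ineq η h0
  have hLE' : LE = ∑ i, |η i| := hLE
  have hLEnn : 0 ≤ LE := by
    rw [hLE']; exact Finset.sum_nonneg fun i _ => abs_nonneg _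
  have hFnn : 0 ≤ F := by
    nlinarith [Finset.sum_nonneg (fun i (_ : i ∈ Finset.univ) => sq_nonneg (η i))]
  constructor
  · have h4F : 4 * F ≤ LE ^ 2 := by rw [hLE']; nlinarith
    have hs : Real.sqrt (4 * F) = 2 * Real.sqrt F := by
      rw [show (4 : ℝ) * F = 2 ^ 2 * F by ring, Real.sqrt_mul (by positivity),
        Real.sqrt_sq (by norm_num)]
    calc 2 * Real.sqrt F = Real.sqrt (4 * F) := hs.symm
    _ ≤ Real.sqrt (LE ^ 2) := Real.sqrt_le_sqrt h4F
    _ = LE := Real.sqrt_sq hLEnn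
  · have hub : LE ^ 2 ≤ 2 * n * F := by rw [hLE']; nlinarith
    calc LE = Real.sqrt (LE ^ 2) := (Real.sqrt_sq hLEnn).symm
    _ ≤ Real.sqrt (2 * n * F) := Real.sqrt_le_sqrt hub
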